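/- Suppose W : [0,∞) → ℝ satisfies, for every x ≥ 0, the fixed-point equation W(x) = sup_{y ≥ x} [−C(y) + p(y)·R + α·(1 − p(y))·(W(y) + C(y))], and that for every x ≥ 0 this supremum is attained at some point ȳ_x ≥ x. Then for every x ≥ 0: (i) W(x) = sup_{y ≥ x} G(y); and (ii) G(ȳ_x) = sup_{y ≥ x} G(y), i.e., the set of maximizers of G over [x,∞) is nonempty and contains ȳ_x. -/

import Mathlib

/-- Let `α ∈ (0,1)`, `R > 0`, `C` the cost function, `p` the test
function with values in `[0,1]` on `[0,∞)`, and define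
`G y := −C y + p y • R / (1 − α + α p y)`.
Suppose `W` satisfies the fixed-point equation
`W x = sup_{y ≥ x} [−C y + p y • R + α (1 − p y) (W y + C y)]` for every `x ≥ 0`,
and that for every `x ≥ 0` the supremum is attained at some `ȳ x ≥ x`.
Then for every `x ≥ 0`: (i) `W x = sup_{y ≥ x} G y`, and (ii) `G (ȳ x)` equals this
supremum, i.e. `ȳ x` is a maximizer of `G` over `[x, ∞)`. -/
theorem W_eq_sup_G
    (α R : ℝ) (hα0 : 0 < α) (hα1 : α < 1) (hR : 0 < R)
    (C p W : ℝ → ℝ) (ybar : ℝ → ℝ)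
    (hp0 : ∀ x, 0 ≤ x → 0 ≤ p x) (hp1 : ∀ x, 0 ≤ x → p x ≤ 1)
    (hbdd : ∀ x, 0 ≤ x →
      BddAbove ((fun y => -C y + p y * R + α * (1 - p y) * (W y + C y)) '' {y | x ≤ y}))
    (hW : ∀ x, 0 ≤ x →
      W x = sSup ((fun y => -C y + p y * R + α * (1 - p y) * (W y + C y)) '' {y | x ≤ y}))
    (hybar_mem : ∀ x, 0 ≤ x → x ≤ ybar x)
    (hybar_att : ∀ x, 0 ≤ x →
      W x = -C (ybar x) + p (ybar x) * R + α * (1 - p (ybar x)) * (W (ybar x) + C (ybar x))) :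
    ∀ x, 0 ≤ x →
      W x = sSup ((fun y => -C y + p y * R / (1 - α + α * p y)) '' {y | x ≤ y}) ∧
      (-C (ybar x) + p (ybar x) * R / (1 - α + α * p (ybar x)))
        = sSup ((fun y => -C y + p y * R / (1 - α + α * p y)) '' {y | x ≤ y}) := by
  intro x hx
  set F : ℝ → ℝ := fun y => -C y + p y * R + α * (1 - p y) * (W y + C y) with hF
  set G : ℝ → ℝ := fun y => -C y + p y * R / (1 - α + α * p y) with hG
  have hD : ∀ y, 0 ≤ y → 0 < 1 - α + α * p y := by
    intro y hy
    have := hp0 y hy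
    nlinarith
  -- W y ≥ F y for y ≥ 0
  have hWF : ∀ y, 0 ≤ y → F y ≤ W y := by
    intro y hy
    rw [hW y hy]
    exact le_csSup (hbdd y hy) ⟨y, le_refl y, rfl⟩
  -- G y ≤ W y for y ≥ 0
  have hGW : ∀ y, 0 ≤ y → G y ≤ W y := by
    intro y hy
    have h1 := hWF y hy
    have hd := hD y hy
    have hdiv : p y * R / (1 - α + α * p y) ≤ W y + C y := by
      rw [div_le_iff₀ hd]
      simp only [hF] at h1
      nlinarith
    simp only [hG]
    linarith
  -- W is antitone on [0,∞)
  have hmono : ∀ a b : ℝ, 0 ≤ a → a ≤ b → W b ≤ W a := by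
    intro a b ha hab
    rw [hW a ha, hW b (ha.trans hab)]
    refine csSup_le_csSup (hbdd a ha) ⟨F b, b, le_refl b, rfl⟩ ?_
    exact Set.image_mono (fun z hz => le_trans hab hz)
  -- W x is an upper bound for G on {y | x ≤ y}
  have hub : ∀ z ∈ G '' {y | x ≤ y}, z ≤ W x := by
    rintro z ⟨y, hy, rfl⟩
    exact le_trans (hGW y (hx.trans hy)) (hmono x y hx hy)
  have hne : (G '' {y | x ≤ y}).Nonempty := ⟨G x, x, le_refl x, rfl⟩
  have hbddG : BddAbove (G '' {y | x ≤ y}) := ⟨W x, hub⟩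
  have hsup_le : sSup (G '' {y | x ≤ y}) ≤ W x := csSup_le hne hub
  -- W x ≤ G (ybar x)
  have hy0 : x ≤ ybar x := hybar_mem x hx
  have hy0' : (0:ℝ) ≤ ybar x := hx.trans hy0
  have hWx_le : W x ≤ G (ybar x) := by
    have hatt := hybar_att x hx
    have hWle : W (ybar x) ≤ W x := hmono x (ybar x) hx hy0
    have hd := hD (ybar x) hy0'
    have hp0' := hp0 (ybar x) hy0'
    have hp1' := hp1 (ybar x) hy0'
    have h2 : W x + C (ybar x) ≤ p (ybar x) * R / (1 - α + α * p (ybar x)) := by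
      rw [le_div_iff₀ hd]
      nlinarith [mul_nonneg (mul_nonneg hα0.le (sub_nonneg.2 hp1')) (sub_nonneg.2 hWle)]
    simp only [hG]
    linarith
  have hG_le : G (ybar x) ≤ sSup (G '' {y | x ≤ y}) :=
    le_csSup hbddG ⟨ybar x, hy0, rfl⟩
  constructor
  · linarith
  · show G (ybar x) = sSup (G '' {y | x ≤ y})
    linarith
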